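/- Let k be odd and f_χ(m) = tanh(β)·Σ_{S∈{-1,1}^k}(∏_j (1+S_j m)/2)·sgn(Σ_j S_j). Then the derivative of f_χ at m = 0 equals tanh(β)·k·C(k-1,(k-1)/2)/2^{k-1}. Consequently, m = 0 is a locally stable fixed point (|f_χ'(0)| < 1) if and only if tanh(β) < 2^{k-1}/(k·C(k-1,(k-1)/2)). -/

import Mathlib

open Finset

/-- `pm b` maps a Boolean to the spin value ±1. -/
noncomputable def pm (b : Bool) : ℝ := if b then 1 else -1

lemma choose_step (m j : ℕ) :
    ((2*m+1).choose (j+1) : ℝ) * (2*((j:ℝ)+1) - (2*(m:ℝ)+1)) =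
      (2*(m:ℝ)+1) * ((2*m).choose j) - (2*(m:ℝ)+1) * ((2*m).choose (j+1)) := by
  have h1 : (2*m+1) * (2*m).choose j = (2*m+1).choose (j+1) * (j+1) := by
    simpa using Nat.add_one_mul_choose_eq (2*m) j
  have h2 : (2*m+1).choose (j+1) = (2*m).choose j + (2*m).choose (j+1) :=
    Nat.choose_succ_succ (2*m) j
  have h1' : (2*(m:ℝ)+1) * ((2*m).choose j) = ((2*m+1).choose (j+1)) * ((j:ℝ)+1) := by
    exact_mod_cast congrArg (Nat.cast : ℕ → ℝ) h1
  have h2' : (((2*m+1).choose (j+1)) : ℝ) = ((2*m).choose j) + ((2*m).choose (j+1)) := by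
    exact_mod_cast congrArg (Nat.cast : ℕ → ℝ) h2
  linear_combination (-2 : ℝ) * h1' - (2*(m:ℝ)+1) * h2'

lemma key_sum (m : ℕ) :
    ∑ t ∈ range (2*m+2), ((2*m+1).choose t : ℝ) * |2*(t:ℝ) - (2*(m:ℝ)+1)| =
      2*(2*(m:ℝ)+1)*((2*m).choose m) := by
  set F : ℕ → ℝ := fun t => ((2*m+1).choose t : ℝ) * |2*(t:ℝ) - (2*(m:ℝ)+1)| with hF
  set g : ℕ → ℝ := fun i => (2*(m:ℝ)+1) * ((2*m).choose (m+i)) with hg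
  set g' : ℕ → ℝ := fun i => (2*(m:ℝ)+1) * ((2*m).choose i) with hg'
  have hsplit : range (2*m+2) = Ico 0 (m+1) ∪ Ico (m+1) (2*m+2) := by
    rw [range_eq_Ico, Finset.Ico_union_Ico_eq_Ico] <;> omega
  rw [hsplit, Finset.sum_union (Finset.Ico_disjoint_Ico_consecutive _ _ _)]
  have e1 : ∑ t ∈ Ico 0 (m+1), F t = (2*(m:ℝ)+1) * ((2*m).choose m) := by
    rw [← range_eq_Ico, Finset.sum_range_succ']
    have hterms : ∀ i ∈ range m, F (i+1) = g' (i+1) - g' i := by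
      intro i hi
      have him : i < m := mem_range.mp hi
      have h := choose_step m i
      have habs : |2*((i:ℝ)+1) - (2*(m:ℝ)+1)| = (2*(m:ℝ)+1) - 2*((i:ℝ)+1) := by
        rw [abs_of_nonpos] <;> [ring; skip]
        have : (i:ℝ) + 1 ≤ m := by exact_mod_cast him
        
        linarith
      simp only [hF, hg']
      push_cast
      rw [habs]
      push_cast at h
      linarith
    rw [Finset.sum_congr rfl hterms, Finset.sum_range_sub g']
    have h0 : F 0 = 2*(m:ℝ)+1 := by
      simp only [hF]
      rw [abs_of_nonpos (by push_cast; linarith [Nat.cast_nonneg (α := ℝ) m])]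
      simp
    have : g' 0 = 2*(m:ℝ)+1 := by simp [hg']
    rw [h0, this]
    simp only [hg']
    ring
  have e2 : ∑ t ∈ Ico (m+1) (2*m+2), F t = (2*(m:ℝ)+1) * ((2*m).choose m) := by
    rw [Finset.sum_Ico_eq_sum_range]
    have hn : 2*m+2 - (m+1) = m+1 := by omega
    rw [hn]
    have hterms : ∀ i ∈ range (m+1), F (m+1+i) = g i - g (i+1) := by
      intro i _
      have h := choose_step m (m+i)
      have habs : |2*(((m+1+i : ℕ)):ℝ) - (2*(m:ℝ)+1)| = 2*(((m+1+i : ℕ)):ℝ) - (2*(m:ℝ)+1) := by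
        rw [abs_of_nonneg]; push_cast; linarith [Nat.cast_nonneg (α := ℝ) i]
      have e' : m+1+i = m+i+1 := by omega
      have e : m + (i+1) = m + i + 1 := by omega
      simp only [hF, hg, e', e]
      rw [e'] at habs
      rw [habs]
      push_cast at h ⊢
      linarith
    rw [Finset.sum_congr rfl hterms, Finset.sum_range_sub' g]
    have hz : (2*m).choose (m+(m+1)) = 0 := Nat.choose_eq_zero_of_lt (by omega)
    simp only [hg, hz]
    simp
  rw [e1, e2]; ring

lemma mul_sign_eq_abs (x : ℝ) : x * Real.sign x = |x| := by
  rcases lt_trichotomy x 0 with h | h | h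
  · rw [Real.sign_of_neg h, abs_of_neg h]; ring
  · simp [h]
  · rw [Real.sign_of_pos h, abs_of_pos h]; ring

def boolEquiv (n : ℕ) : Finset (Fin n) ≃ (Fin n → Bool) where
  toFun s j := decide (j ∈ s)
  invFun S := univ.filter (fun j => S j)
  left_inv s := by ext j; simp
  right_inv S := by funext j; simp

lemma sum_pm_indicator {n : ℕ} (s : Finset (Fin n)) :
    ∑ j, pm (boolEquiv n s j) = 2 * s.card - n := by
  have : ∀ j, pm (boolEquiv n s j) = 2 * (if j ∈ s then (1:ℝ) else 0) - 1 := by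
    intro j; by_cases h : j ∈ s <;> simp [boolEquiv, pm, h] <;> norm_num
  rw [Finset.sum_congr rfl fun j _ => this j]
  rw [Finset.sum_sub_distrib, ← Finset.mul_sum, Finset.sum_ite_mem]
  simp [mul_comm]

lemma sum_abs_pm (m : ℕ) :
    ∑ S : Fin (2*m+1) → Bool, |∑ j, pm (S j)| =
      2*(2*(m:ℝ)+1)*((2*m).choose m) := by
  rw [← Equiv.sum_comp (boolEquiv (2*m+1)) (fun S => |∑ j, pm (S j)|)]
  have h1 : ∀ s : Finset (Fin (2*m+1)),
      |∑ j, pm (boolEquiv (2*m+1) s j)| = |2*(s.card:ℝ) - (2*(m:ℝ)+1)| := by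
    intro s; rw [sum_pm_indicator]; push_cast; ring_nf
  rw [Finset.sum_congr rfl fun s _ => h1 s]
  have h2 : (univ : Finset (Finset (Fin (2*m+1)))) = (univ : Finset (Fin (2*m+1))).powerset :=
    (Finset.powerset_univ).symm
  rw [h2, Finset.sum_powerset_apply_card (fun t => |2*(t:ℝ) - (2*(m:ℝ)+1)|)]
  simp only [card_univ, Fintype.card_fin, nsmul_eq_mul]
  have : 2*m+1+1 = 2*m+2 := rfl
  rw [this]
  exact key_sum m
/-- For odd `k`, the derivative of the majority magnetization map at `m = 0` equals
`tanh(β)·k·C(k-1,(k-1)/2)/2^(k-1)`; hence `|f_χ'(0)| < 1` iff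
`tanh β < 2^(k-1)/(k·C(k-1,(k-1)/2))`. -/
theorem stmt5 (k : ℕ) (hk : Odd k) (β : ℝ) (hβ : 0 < β)
    (fχ : ℝ → ℝ)
    (hf : ∀ m, fχ m = Real.tanh β *
      ∑ S : Fin k → Bool, (∏ j, (1 + pm (S j) * m) / 2) * Real.sign (∑ j, pm (S j))) :
    deriv fχ 0 = Real.tanh β * (k : ℝ) * (Nat.choose (k - 1) ((k - 1) / 2) : ℝ) / 2 ^ (k - 1)
    ∧ (|deriv fχ 0| < 1 ↔
        Real.tanh β < 2 ^ (k - 1) / ((k : ℝ) * (Nat.choose (k - 1) ((k - 1) / 2) : ℝ))) := by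
  obtain ⟨m, hm⟩ := hk
  have hk2 : k = 2*m+1 := by omega
  subst hk2
  have hd1 : 2*m+1-1 = 2*m := rfl
  have hd2 : (2*m)/2 = m := by omega
  rw [hd1, hd2]
  -- derivative of each summand
  have hsum : ∀ S : Fin (2*m+1) → Bool,
      HasDerivAt (fun x : ℝ => (∏ j, (1 + pm (S j) * x) / 2) * Real.sign (∑ j, pm (S j)))
        (|∑ j, pm (S j)| / 2 ^ (2*m+1)) 0 := by
    intro S
    have hfac : ∀ i : Fin (2*m+1), HasDerivAt (fun x : ℝ => (1 + pm (S i) * x) / 2)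
        (pm (S i) / 2) 0 := by
      intro i
      have h := (((hasDerivAt_id (0:ℝ)).const_mul (pm (S i))).const_add 1).div_const 2
      simpa using h
    have hp := HasDerivAt.fun_finsetProd (u := univ) (x := (0:ℝ))
      (f := fun (i : Fin (2*m+1)) (x : ℝ) => (1 + pm (S i) * x) / 2)
      (f' := fun i => pm (S i) / 2) (fun i _ => hfac i)
    have hval : (∑ i : Fin (2*m+1),
        (∏ j ∈ univ.erase i, (1 + pm (S j) * (0:ℝ)) / 2) • (pm (S i) / 2))
        = (∑ j, pm (S j)) / 2 ^ (2*m+1) := by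
      have hcard : ∀ i : Fin (2*m+1), (univ.erase i).card = 2*m := by
        intro i
        rw [Finset.card_erase_of_mem (mem_univ i), card_univ, Fintype.card_fin]
        omega
      have : ∀ i : Fin (2*m+1),
          (∏ j ∈ univ.erase i, (1 + pm (S j) * (0:ℝ)) / 2) • (pm (S i) / 2)
          = pm (S i) / 2 ^ (2*m+1) := by
        intro i
        rw [smul_eq_mul]
        have hpc : (∏ j ∈ univ.erase i, (1 + pm (S j) * (0:ℝ)) / 2)
            = ∏ _j ∈ univ.erase i, (1/2 : ℝ) :=
          Finset.prod_congr rfl (fun j _ => by norm_num)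
        rw [hpc, Finset.prod_const, hcard]
        rw [div_pow, one_pow, pow_succ]
        ring
      rw [Finset.sum_congr rfl (fun i _ => this i), ← Finset.sum_div]
    rw [hval] at hp
    have := hp.mul_const (Real.sign (∑ j, pm (S j)))
    have heq : (∑ j, pm (S j)) / 2 ^ (2*m+1) * Real.sign (∑ j, pm (S j))
        = |∑ j, pm (S j)| / 2 ^ (2*m+1) := by
      rw [div_mul_eq_mul_div, mul_sign_eq_abs]
    rw [heq] at this
    exact this
  have hD : HasDerivAt fχ
      (Real.tanh β * (2*(m:ℝ)+1) * ((2*m).choose m) / 2 ^ (2*m)) 0 := by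
    have hfun : fχ = fun x => Real.tanh β *
        ∑ S : Fin (2*m+1) → Bool, (∏ j, (1 + pm (S j) * x) / 2) * Real.sign (∑ j, pm (S j)) :=
      funext hf
    rw [hfun]
    have hsum2 := (HasDerivAt.fun_sum (u := univ) (fun S _ => hsum S)).const_mul (Real.tanh β)
    have hv : Real.tanh β * (∑ S : Fin (2*m+1) → Bool, |∑ j, pm (S j)| / 2 ^ (2*m+1))
        = Real.tanh β * (2*(m:ℝ)+1) * ((2*m).choose m) / 2 ^ (2*m) := by
      rw [← Finset.sum_div, sum_abs_pm]
      rw [pow_succ]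
      ring
    rw [hv] at hsum2
    exact hsum2
  have hderiv := hD.deriv
  refine ⟨by rw [hderiv]; push_cast; ring, ?_⟩
  rw [hderiv]
  have hC : (0:ℝ) < ((2*m).choose m : ℝ) := by
    exact_mod_cast Nat.choose_pos (by omega)
  have htanh : 0 < Real.tanh β := by
    rw [Real.tanh_eq_sinh_div_cosh]
    exact div_pos (Real.sinh_pos_iff.mpr hβ) (Real.cosh_pos β)
  have hpow : (0:ℝ) < 2 ^ (2*m) := by positivity
  have hpos : 0 < Real.tanh β * (2*(m:ℝ)+1) * ((2*m).choose m) / 2 ^ (2*m) := by positivity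
  rw [abs_of_pos hpos]
  rw [div_lt_one hpow]
  rw [lt_div_iff₀ (by positivity : (0:ℝ) < ((2*m+1:ℕ):ℝ) * ((2*m).choose m))]
  push_cast
  rw [mul_assoc]
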